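/- For (x,y) ∈ ℝ² with ρ = √(x²+y²) > 0, the matrix ξ = (1/ρ)·[[√2·ρ, 0, ρ, 0], [-y, x, -√2·y, 0], [x, y, √2·x, 0], [0, 0, 0, ρ]] satisfies ξᵀ η ξ = η with η = diag(-1,1,1,1), and ξ·(1,0,0,0)ᵀ = (√2, -y/ρ, x/ρ, 0)ᵀ. -/

import Mathlib

set_option maxHeartbeats 2000000


open Matrix

noncomputable def minkEta : Matrix (Fin 4) (Fin 4) ℝ :=
  Matrix.diagonal ![-1, 1, 1, 1]

noncomputable def rotBoost (x y : ℝ) : Matrix (Fin 4) (Fin 4) ℝ :=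
  (Real.sqrt (x ^ 2 + y ^ 2))⁻¹ •
    !![Real.sqrt 2 * Real.sqrt (x ^ 2 + y ^ 2), 0, Real.sqrt (x ^ 2 + y ^ 2), 0;
       -y, x, -(Real.sqrt 2 * y), 0;
       x, y, Real.sqrt 2 * x, 0;
       0, 0, 0, Real.sqrt (x ^ 2 + y ^ 2)]

theorem stmt_13 (x y : ℝ) (hρ : 0 < Real.sqrt (x ^ 2 + y ^ 2)) :
    (rotBoost x y)ᵀ * minkEta * rotBoost x y = minkEta ∧
    (rotBoost x y).mulVec ![1, 0, 0, 0] =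
      ![Real.sqrt 2, -y / Real.sqrt (x ^ 2 + y ^ 2),
        x / Real.sqrt (x ^ 2 + y ^ 2), 0] := by
  set ρ := Real.sqrt (x ^ 2 + y ^ 2) with hρdef
  have hρ0 : ρ ≠ 0 := ne_of_gt hρ
  have hρ2 : ρ ^ 2 = x ^ 2 + y ^ 2 := Real.sq_sqrt (by positivity)
  have h2 : Real.sqrt 2 ^ 2 = 2 := Real.sq_sqrt (by norm_num)
  have hs : x ^ 2 + y ^ 2 ≠ 0 := by
    intro h; rw [hρdef, h, Real.sqrt_zero] at hρ; exact lt_irrefl 0 hρ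
  constructor
  · ext i j
    fin_cases i <;> fin_cases j <;>
      simp [rotBoost, minkEta, Matrix.mul_apply, Fin.sum_univ_four,
        Matrix.diagonal, Matrix.transpose] <;>
      field_simp <;> nlinarith [h2, congrArg (Real.sqrt 2 * ·) (Real.sq_sqrt (show (0:ℝ) ≤ x ^ 2 + y ^ 2 by positivity))]
  · funext i
    fin_cases i <;>
      simp [rotBoost, Matrix.mulVec, dotProduct, Fin.sum_univ_four] <;>
      field_simp <;> ring
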